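/- The group $\widetilde{SL}(2,\mathbb{Z})$, defined as the preimage of $SL(2,\mathbb{Z})$ in the central extension $\widetilde{SL}(2,\mathbb{R})$ of $SL(2,\mathbb{R})$ by $\mathbb{Z}$, has the presentation $\langle a_1, a_2, t \mid a_1 a_2 a_1 = a_2 a_1 a_2,\ (a_1 a_2)^6 = t^2,\ [a_1,t] = [a_2,t] = 1 \rangle$. Equivalently: the abstract group with this presentation is a central extension of $SL(2,\mathbb{Z})$ by the infinite cyclic group generated by $t$, where $SL(2,\mathbb{Z})$ has presentation $\langle g_1, g_2 \mid g_1 g_2 g_1 = g_2 g_1 g_2,\ (g_1 g_2)^6 = 1 \rangle$. -/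

import Mathlib

/-!
STATEMENT 7: The group `G = ⟨a₁,a₂,t ∣ a₁a₂a₁ = a₂a₁a₂, (a₁a₂)⁶ = t²,
[a₁,t] = [a₂,t] = 1⟩` (the presentation of `widetilde{SL}(2,ℤ)`) is a central
extension of `SL(2,ℤ) = ⟨g₁,g₂ ∣ g₁g₂g₁ = g₂g₁g₂, (g₁g₂)⁶ = 1⟩` by the infinite
cyclic group generated by `t`: there is a surjection `G → SL(2,ℤ)` sending
`aᵢ ↦ gᵢ`, `t ↦ 1`, whose kernel is the central subgroup generated by `t`. -/

open FreeGroup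

/-- Generators `a₁ = 0`, `a₂ = 1`, `t = 2`. -/
def tildeRels : Set (FreeGroup (Fin 3)) :=
  { of 0 * of 1 * of 0 * (of 1 * of 0 * of 1)⁻¹,
    (of 0 * of 1) ^ 6 * (of 2 * of 2)⁻¹,
    of 0 * of 2 * (of 2 * of 0)⁻¹,
    of 1 * of 2 * (of 2 * of 1)⁻¹ }

/-- The group `widetilde{SL}(2,ℤ)` given by the presentation above. -/
def TildeSL2Z : Type := PresentedGroup tildeRels

instance : Group TildeSL2Z := by unfold TildeSL2Z; infer_instance

/-- Generators `g₁ = 0`, `g₂ = 1`. -/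
def sl2zRels : Set (FreeGroup (Fin 2)) :=
  { of 0 * of 1 * of 0 * (of 1 * of 0 * of 1)⁻¹,
    (of 0 * of 1) ^ 6 }

/-- `SL(2,ℤ)` via the presentation `⟨g₁,g₂ ∣ g₁g₂g₁ = g₂g₁g₂, (g₁g₂)⁶ = 1⟩`. -/
def SL2ZPres : Type := PresentedGroup sl2zRels

instance : Group SL2ZPres := by unfold SL2ZPres; infer_instance

/-- `a₁`, `a₂`, `t` in `widetilde{SL}(2,ℤ)`. -/
def a₁ : TildeSL2Z := PresentedGroup.of (0 : Fin 3)
def a₂ : TildeSL2Z := PresentedGroup.of (1 : Fin 3)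
def tGen : TildeSL2Z := PresentedGroup.of (2 : Fin 3)

/-- `g₁`, `g₂` in the presented `SL(2,ℤ)`. -/
def s₁ : SL2ZPres := PresentedGroup.of (0 : Fin 2)
def s₂ : SL2ZPres := PresentedGroup.of (1 : Fin 2)

lemma rel_holds {α : Type*} {rels : Set (FreeGroup α)} {r : FreeGroup α} (h : r ∈ rels) :
    PresentedGroup.mk rels r = 1 := by
  change (QuotientGroup.mk r : PresentedGroup rels) = 1
  rw [QuotientGroup.eq_one_iff]
  exact Subgroup.subset_normalClosure h

lemma s_braid : s₁ * s₂ * s₁ = s₂ * s₁ * s₂ := by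
  have h := rel_holds (rels := sl2zRels) (Set.mem_insert _ _)
  simp only [MonoidHom.map_mul, MonoidHom.map_inv, mul_inv_eq_one] at h
  exact h

lemma s_six : (s₁ * s₂) ^ 6 = 1 := by
  have h := rel_holds (rels := sl2zRels) (Set.mem_insert_of_mem _ rfl)
  simp only [MonoidHom.map_mul, MonoidHom.map_pow] at h
  exact h

lemma t_braid : a₁ * a₂ * a₁ = a₂ * a₁ * a₂ := by
  have h := rel_holds (rels := tildeRels) (Set.mem_insert _ _)
  simp only [MonoidHom.map_mul, MonoidHom.map_inv, mul_inv_eq_one] at h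
  exact h

lemma t_six : (a₁ * a₂) ^ 6 = tGen * tGen := by
  have h := rel_holds (rels := tildeRels)
    (Set.mem_insert_of_mem _ (Set.mem_insert _ _))
  simp only [MonoidHom.map_mul, MonoidHom.map_inv, MonoidHom.map_pow, mul_inv_eq_one] at h
  exact h

lemma t_comm1 : a₁ * tGen = tGen * a₁ := by
  have h := rel_holds (rels := tildeRels)
    (Set.mem_insert_of_mem _ (Set.mem_insert_of_mem _ (Set.mem_insert _ _)))
  simp only [MonoidHom.map_mul, MonoidHom.map_inv, mul_inv_eq_one] at h
  exact h

lemma t_comm2 : a₂ * tGen = tGen * a₂ := by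
  have h := rel_holds (rels := tildeRels)
    (Set.mem_insert_of_mem _ (Set.mem_insert_of_mem _ (Set.mem_insert_of_mem _ rfl)))
  simp only [MonoidHom.map_mul, MonoidHom.map_inv, mul_inv_eq_one] at h
  exact h

lemma tGen_central : tGen ∈ Subgroup.center TildeSL2Z := by
  rw [Subgroup.mem_center_iff]
  intro g
  have hg : g ∈ Subgroup.centralizer {tGen} := by
    refine PresentedGroup.generated_by tildeRels
      (Subgroup.centralizer {tGen}) (fun j => ?_) g
    rw [Subgroup.mem_centralizer_iff]
    intro h hh
    rcases hh with rfl
    fin_cases j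
    · exact (t_comm1).symm
    · exact (t_comm2).symm
    · rfl
  exact (Subgroup.mem_centralizer_iff.mp hg tGen rfl).symm

/-- f for φ : TildeSL2Z → SL2ZPres. -/
def fphi : Fin 3 → SL2ZPres := ![s₁, s₂, 1]

lemma fphi_rels : ∀ r ∈ tildeRels, FreeGroup.lift fphi r = 1 := by
  intro r hr
  rcases hr with rfl | rfl | rfl | rfl
  · simp only [MonoidHom.map_mul, MonoidHom.map_inv, FreeGroup.lift_apply_of, mul_inv_eq_one, fphi,
      Matrix.cons_val_zero, Matrix.cons_val_one, Matrix.head_cons]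
    exact s_braid
  · simp only [MonoidHom.map_mul, MonoidHom.map_inv, MonoidHom.map_pow, FreeGroup.lift_apply_of,
      mul_inv_eq_one, fphi, Matrix.cons_val_zero, Matrix.cons_val_one, Matrix.head_cons]
    simpa using s_six
  · simp [MonoidHom.map_mul, MonoidHom.map_inv, FreeGroup.lift_apply_of, fphi]
  · simp [MonoidHom.map_mul, MonoidHom.map_inv, FreeGroup.lift_apply_of, fphi]

def phi : TildeSL2Z →* SL2ZPres := PresentedGroup.toGroup fphi_rels

lemma phi_a₁ : phi a₁ = s₁ := PresentedGroup.toGroup.of fphi_rels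
lemma phi_a₂ : phi a₂ = s₂ := PresentedGroup.toGroup.of fphi_rels
lemma phi_t : phi tGen = 1 := PresentedGroup.toGroup.of fphi_rels

lemma phi_surj : Function.Surjective phi := by
  intro y
  refine PresentedGroup.generated_by sl2zRels phi.range (fun j => ?_) y
  fin_cases j
  · exact ⟨a₁, phi_a₁⟩
  · exact ⟨a₂, phi_a₂⟩

-- the central subgroup N = zpowers tGen
instance : (Subgroup.zpowers tGen).Normal := by
  constructor
  intro n hn g
  obtain ⟨k, rfl⟩ := hn
  have hcom : Commute g tGen := Subgroup.mem_center_iff.mp tGen_central g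
  have hck : g * tGen ^ k = tGen ^ k * g := hcom.zpow_right k
  show g * tGen ^ k * g⁻¹ ∈ Subgroup.zpowers tGen
  rw [hck, mul_assoc, mul_inv_cancel, mul_one]
  exact ⟨k, rfl⟩

abbrev Qt : Type := TildeSL2Z ⧸ Subgroup.zpowers tGen
noncomputable instance : Group Qt := inferInstance

def fsig : Fin 2 → Qt := ![QuotientGroup.mk a₁, QuotientGroup.mk a₂]

lemma fsig_rels : ∀ r ∈ sl2zRels, FreeGroup.lift fsig r = 1 := by
  intro r hr
  rcases hr with rfl | rfl
  · simp only [MonoidHom.map_mul, MonoidHom.map_inv, FreeGroup.lift_apply_of, mul_inv_eq_one, fsig,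
      Matrix.cons_val_zero, Matrix.cons_val_one, Matrix.head_cons]
    rw [← QuotientGroup.mk_mul, ← QuotientGroup.mk_mul, ← QuotientGroup.mk_mul,
      ← QuotientGroup.mk_mul, t_braid]
  · simp only [MonoidHom.map_mul, MonoidHom.map_pow, FreeGroup.lift_apply_of, fsig,
      Matrix.cons_val_zero, Matrix.cons_val_one, Matrix.head_cons]
    rw [← QuotientGroup.mk_mul, ← QuotientGroup.mk_pow, t_six, QuotientGroup.eq_one_iff]
    exact ⟨2, by rw [show (fun x => tGen ^ x) (2:ℤ) = tGen ^ (2:ℤ) from rfl, zpow_two]⟩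

noncomputable def sigma : SL2ZPres →* Qt := PresentedGroup.toGroup fsig_rels

lemma tGen_mem : tGen ∈ Subgroup.zpowers tGen := Subgroup.mem_zpowers tGen

lemma sigma_phi : sigma.comp phi = QuotientGroup.mk' (Subgroup.zpowers tGen) := by
  apply PresentedGroup.ext
  intro x
  show sigma (phi (PresentedGroup.of x : TildeSL2Z)) = (QuotientGroup.mk (PresentedGroup.of x : TildeSL2Z) : Qt)
  have h0 : sigma (phi a₁) = (QuotientGroup.mk a₁ : Qt) := by
    rw [phi_a₁]; exact PresentedGroup.toGroup.of fsig_rels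
  have h1 : sigma (phi a₂) = (QuotientGroup.mk a₂ : Qt) := by
    rw [phi_a₂]; exact PresentedGroup.toGroup.of fsig_rels
  have h2 : sigma (phi tGen) = (QuotientGroup.mk tGen : Qt) := by
    rw [phi_t, MonoidHom.map_one]
    exact ((QuotientGroup.eq_one_iff tGen).mpr tGen_mem).symm
  fin_cases x
  · exact h0
  · exact h1
  · exact h2

lemma phi_ker : phi.ker = Subgroup.zpowers tGen := by
  ext x
  constructor
  · intro hx
    have h1 : sigma (phi x) = QuotientGroup.mk' (Subgroup.zpowers tGen) x :=
      congrFun (congrArg DFunLike.coe sigma_phi) x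
    rw [MonoidHom.mem_ker.mp hx, MonoidHom.map_one] at h1
    have := (QuotientGroup.eq_one_iff x).mp h1.symm
    exact this
  · rintro ⟨k, rfl⟩
    rw [MonoidHom.mem_ker, MonoidHom.map_zpow, phi_t, one_zpow]

def fz : Fin 3 → Multiplicative ℤ := ![Multiplicative.ofAdd 1, Multiplicative.ofAdd 1, Multiplicative.ofAdd 6]

lemma fz_rels : ∀ r ∈ tildeRels, FreeGroup.lift fz r = 1 := by
  intro r hr
  rcases hr with rfl | rfl | rfl | rfl <;>
  · simp only [MonoidHom.map_mul, MonoidHom.map_inv, MonoidHom.map_pow, FreeGroup.lift_apply_of, fz,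
      Matrix.cons_val_zero, Matrix.cons_val_one, Matrix.head_cons, Matrix.cons_val_two,
      Matrix.tail_cons]
    decide

def zeta : TildeSL2Z →* Multiplicative ℤ := PresentedGroup.toGroup fz_rels

lemma tGen_inf : ∀ ν : ℤ, ν ≠ 0 → tGen ^ ν ≠ 1 := by
  intro ν hν h
  have h2 : zeta (tGen ^ ν) = 1 := by rw [h, MonoidHom.map_one]
  rw [MonoidHom.map_zpow] at h2
  have h3 : zeta tGen = Multiplicative.ofAdd 6 := PresentedGroup.toGroup.of fz_rels
  rw [h3] at h2
  have : (6 : ℤ) * ν = 0 := by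
    have := congrArg Multiplicative.toAdd h2
    simpa [toAdd_zpow, mul_comm] using this
  omega

theorem tilde_SL2Z_central_extension :
    ∃ φ : TildeSL2Z →* SL2ZPres,
      φ a₁ = s₁ ∧ φ a₂ = s₂ ∧ φ tGen = 1 ∧
      Function.Surjective φ ∧
      φ.ker = Subgroup.zpowers tGen ∧
      tGen ∈ Subgroup.center TildeSL2Z ∧
      ∀ ν : ℤ, ν ≠ 0 → tGen ^ ν ≠ 1 :=
  ⟨phi, phi_a₁, phi_a₂, phi_t, phi_surj, phi_ker, tGen_central, tGen_inf⟩
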